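/- Write an element of V_{1,6} as H = X₁P + Y₁Q with P = Σ_{i=0}^{6} C(6,i) α_i X₂^i Y₂^{6−i} and Q = Σ_{i=0}^{6} C(6,i) β_i X₂^i Y₂^{6−i}. Then T^{(1,2)}(H, X₁Y₂² + Y₁X₂²) = 0 if and only if α_i = β_{i+2} for all 0 ≤ i ≤ 4. In particular, the kernel of T^{(1,2)}(•, X₁Y₂² + Y₁X₂²) : V_{1,6} → V_{0,4} has dimension 9. -/

import Mathlib

set_option synthInstance.maxHeartbeats 1000000
set_option maxHeartbeats 4000000
noncomputable section
open MvPolynomial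

/-- The `r`-th transvectant `T^(r) : V_d × V_{d'} → V_{d+d'-2r}` of binary forms (in the
variables `X = X 0`, `Y = X 1`), as a bilinear map:
`T^(r)(P, P') = ∑_{i=0}^{r} (-1)^i C(r,i) (∂^r P/∂X^(r-i)∂Y^i) (∂^r P'/∂X^i ∂Y^(r-i))`. -/
def transvBil (r : ℕ) :
    MvPolynomial (Fin 2) ℂ →ₗ[ℂ] MvPolynomial (Fin 2) ℂ →ₗ[ℂ] MvPolynomial (Fin 2) ℂ :=
  ∑ i ∈ Finset.range (r + 1),
    ((-1 : ℂ) ^ i * (r.choose i : ℂ)) •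
      (LinearMap.mul ℂ (MvPolynomial (Fin 2) ℂ)).compl₁₂
        (((pderiv (0 : Fin 2)).toLinearMap ^ (r - i)) * ((pderiv (1 : Fin 2)).toLinearMap ^ i))
        (((pderiv (0 : Fin 2)).toLinearMap ^ i) * ((pderiv (1 : Fin 2)).toLinearMap ^ (r - i)))

/-- The `(1,s)`-th transvectant `T^{(1,s)} : V_{1,b} × V_{1,b'} → V_{0,b+b'-2s}` for biforms,
where an element `X₁ ⊗ P + Y₁ ⊗ Q` of `V_{1,b} = V_1 ⊗ V_b` is recorded as the pair
`(P, Q)` of binary forms of degree `b` in `(X₂, Y₂)`: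
`T^{(1,s)}((P,Q), (P',Q')) = T^(s)(P, Q') - T^(s)(Q, P')`. -/
def transv1 (s : ℕ) :
    (MvPolynomial (Fin 2) ℂ × MvPolynomial (Fin 2) ℂ) →ₗ[ℂ]
      (MvPolynomial (Fin 2) ℂ × MvPolynomial (Fin 2) ℂ) →ₗ[ℂ] MvPolynomial (Fin 2) ℂ :=
  (transvBil s).compl₁₂ (LinearMap.fst ℂ _ _) (LinearMap.snd ℂ _ _) -
    (transvBil s).compl₁₂ (LinearMap.snd ℂ _ _) (LinearMap.fst ℂ _ _)

/-- The degree-6 binary form `∑_{i=0}^{6} C(6,i) α_i X₂^i Y₂^(6-i)`. -/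
def formOf (α : Fin 7 → ℂ) : MvPolynomial (Fin 2) ℂ :=
  ∑ i : Fin 7, C ((Nat.choose 6 (i : ℕ) : ℂ) * α i) * X 0 ^ (i : ℕ) * X 1 ^ (6 - (i : ℕ))

/-! ### Auxiliary lemmas -/

lemma pd1 (a : ℂ) (i j : ℕ) :
    pderiv 1 (C a * X 0 ^ i * X (1:Fin 2) ^ j) = C (a * j) * X 0 ^ i * X 1 ^ (j-1) := by
  simp only [mul_assoc, pderiv_C_mul, pderiv_mul, pderiv_pow, pderiv_X_self,
    pderiv_X_of_ne (show (0:Fin 2) ≠ 1 by decide), mul_zero, zero_mul, add_zero, zero_add,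
    mul_one, smul_eq_mul, pderiv_C, C_mul, C_eq_coe_nat]
  try ring

lemma pd0 (a : ℂ) (i j : ℕ) :
    pderiv 0 (C a * X 0 ^ i * X (1:Fin 2) ^ j) = C (a * i) * X 0 ^ (i-1) * X 1 ^ j := by
  simp only [mul_assoc, pderiv_C_mul, pderiv_mul, pderiv_pow, pderiv_X_self,
    pderiv_X_of_ne (show (1:Fin 2) ≠ 0 by decide), mul_zero, zero_mul, add_zero, zero_add,
    mul_one, smul_eq_mul, pderiv_C, C_mul, C_eq_coe_nat]
  try ring

lemma dd1 (α : Fin 7 → ℂ) :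
    (pderiv 1 (pderiv 1 (formOf α))) =
      C (30 * α 0) * X 1 ^ 4 + C (120 * α 1) * X 0 * X 1 ^ 3 +
      C (180 * α 2) * X 0 ^ 2 * X 1 ^ 2 + C (120 * α 3) * X 0 ^ 3 * X 1 +
      C (30 * α 4) * X 0 ^ 4 := by
  simp only [formOf, Fin.sum_univ_seven, (show ((0:Fin 7):ℕ)=0 from rfl),
    (show ((1:Fin 7):ℕ)=1 from rfl), (show ((2:Fin 7):ℕ)=2 from rfl),
    (show ((3:Fin 7):ℕ)=3 from rfl), (show ((4:Fin 7):ℕ)=4 from rfl),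
    (show ((5:Fin 7):ℕ)=5 from rfl), (show ((6:Fin 7):ℕ)=6 from rfl),
    map_add, pd1]
  norm_num [C_mul, map_ofNat, (show Nat.choose 6 2 = 15 from rfl),
    (show Nat.choose 6 3 = 20 from rfl), (show Nat.choose 6 4 = 15 from rfl)]
  ring

lemma dd0 (β : Fin 7 → ℂ) :
    (pderiv 0 (pderiv 0 (formOf β))) =
      C (30 * β 2) * X 1 ^ 4 + C (120 * β 3) * X 0 * X 1 ^ 3 +
      C (180 * β 4) * X 0 ^ 2 * X 1 ^ 2 + C (120 * β 5) * X 0 ^ 3 * X 1 +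
      C (30 * β 6) * X 0 ^ 4 := by
  simp only [formOf, Fin.sum_univ_seven, (show ((0:Fin 7):ℕ)=0 from rfl),
    (show ((1:Fin 7):ℕ)=1 from rfl), (show ((2:Fin 7):ℕ)=2 from rfl),
    (show ((3:Fin 7):ℕ)=3 from rfl), (show ((4:Fin 7):ℕ)=4 from rfl),
    (show ((5:Fin 7):ℕ)=5 from rfl), (show ((6:Fin 7):ℕ)=6 from rfl),
    map_add, pd0]
  norm_num [C_mul, map_ofNat, (show Nat.choose 6 2 = 15 from rfl),
    (show Nat.choose 6 3 = 20 from rfl), (show Nat.choose 6 4 = 15 from rfl)]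
  ring

lemma tbase (p q : MvPolynomial (Fin 2) ℂ) :
    transv1 2 (p, q) (X 1 ^ 2, X 0 ^ 2) =
      2 • (pderiv 1 (pderiv 1 p)) - 2 • (pderiv 0 (pderiv 0 q)) := by
  simp [transv1, transvBil, Finset.sum_range_succ, pow_succ, Module.End.mul_apply]
  ring_nf

lemma key (α β : Fin 7 → ℂ) :
    transv1 2 (formOf α, formOf β) (X 1 ^ 2, X 0 ^ 2) =
      C (60 * (α 0 - β 2)) * X 0 ^ 0 * X 1 ^ 4 + C (240 * (α 1 - β 3)) * X 0 ^ 1 * X 1 ^ 3 +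
      C (360 * (α 2 - β 4)) * X 0 ^ 2 * X 1 ^ 2 + C (240 * (α 3 - β 5)) * X 0 ^ 3 * X 1 ^ 1 +
      C (60 * (α 4 - β 6)) * X 0 ^ 4 * X 1 ^ 0 := by
  rw [tbase, dd1, dd0]
  simp only [smul_add, smul_sub, C_mul, map_sub, map_ofNat, nsmul_eq_mul, Nat.cast_ofNat]
  ring

lemma monrep (c : ℂ) (a b : ℕ) :
    C c * X 0 ^ a * X (1:Fin 2) ^ b = monomial (Finsupp.single 0 a + Finsupp.single 1 b) c := by
  rw [X_pow_eq_monomial, X_pow_eq_monomial, mul_assoc, monomial_mul, C_mul_monomial]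
  norm_num

lemma single_pair_eq (a b c d : ℕ) :
    (Finsupp.single (0:Fin 2) a + Finsupp.single 1 b = Finsupp.single 0 c + Finsupp.single 1 d) ↔
      (a = c ∧ b = d) := by
  constructor
  · intro h
    have h0 := DFunLike.congr_fun h 0
    have h1 := DFunLike.congr_fun h 1
    simp [Finsupp.single_apply] at h0 h1
    exact ⟨h0, h1⟩
  · rintro ⟨rfl, rfl⟩; rfl

lemma fin2_decomp (m : Fin 2 →₀ ℕ) :
    m = Finsupp.single 0 (m 0) + Finsupp.single 1 (m 1) := by
  ext x; fin_cases x <;> simp [Finsupp.single_apply]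

lemma degree_fin2 (m : Fin 2 →₀ ℕ) : m.degree = m 0 + m 1 := by
  rw [Finsupp.degree_apply, Finset.sum_subset (Finset.subset_univ _)
    (fun x _ hx => by simpa using (Finsupp.notMem_support_iff.mp hx))]
  exact Fin.sum_univ_two m


lemma key2 (α β : Fin 7 → ℂ) :
    transv1 2 (formOf α, formOf β) (X 1 ^ 2, X 0 ^ 2) =
      monomial (Finsupp.single 0 0 + Finsupp.single 1 4) (60 * (α 0 - β 2)) +
      monomial (Finsupp.single 0 1 + Finsupp.single 1 3) (240 * (α 1 - β 3)) +
      monomial (Finsupp.single 0 2 + Finsupp.single 1 2) (360 * (α 2 - β 4)) +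
      monomial (Finsupp.single 0 3 + Finsupp.single 1 1) (240 * (α 3 - β 5)) +
      monomial (Finsupp.single 0 4 + Finsupp.single 1 0) (60 * (α 4 - β 6)) := by
  rw [key, monrep, monrep, monrep, monrep, monrep]

lemma main_iff (α β : Fin 7 → ℂ) :
    transv1 2 (formOf α, formOf β) (X 1 ^ 2, X 0 ^ 2) = 0 ↔
      ∀ (i : ℕ) (h : i ≤ 4), α ⟨i, Nat.lt_of_le_of_lt h (by norm_num)⟩ = β ⟨i + 2, Nat.add_lt_add_right (Nat.lt_of_le_of_lt h (by norm_num : 4 < 5)) 2⟩ := by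
  rw [key2]
  constructor
  · intro h i hi
    interval_cases i
    · have h0 := congrArg (coeff (Finsupp.single (0:Fin 2) 0 + Finsupp.single 1 4)) h
      simp only [coeff_add, coeff_monomial, coeff_zero, single_pair_eq] at h0
      norm_num [sub_eq_zero] at h0
      exact h0
    · have h0 := congrArg (coeff (Finsupp.single (0:Fin 2) 1 + Finsupp.single 1 3)) h
      simp only [coeff_add, coeff_monomial, coeff_zero, single_pair_eq] at h0
      norm_num [sub_eq_zero] at h0
      exact h0
    · have h0 := congrArg (coeff (Finsupp.single (0:Fin 2) 2 + Finsupp.single 1 2)) h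
      simp only [coeff_add, coeff_monomial, coeff_zero, single_pair_eq] at h0
      norm_num [sub_eq_zero] at h0
      exact h0
    · have h0 := congrArg (coeff (Finsupp.single (0:Fin 2) 3 + Finsupp.single 1 1)) h
      simp only [coeff_add, coeff_monomial, coeff_zero, single_pair_eq] at h0
      norm_num [sub_eq_zero] at h0
      exact h0
    · have h0 := congrArg (coeff (Finsupp.single (0:Fin 2) 4 + Finsupp.single 1 0)) h
      simp only [coeff_add, coeff_monomial, coeff_zero, single_pair_eq] at h0
      norm_num [sub_eq_zero] at h0
      exact h0
  · intro h
    have e0 : α 0 = β 2 := h 0 (by omega)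
    have e1 : α 1 = β 3 := h 1 (by omega)
    have e2 : α 2 = β 4 := h 2 (by omega)
    have e3 : α 3 = β 5 := h 3 (by omega)
    have e4 : α 4 = β 6 := h 4 (by omega)
    rw [e0, e1, e2, e3, e4]
    simp

/-! ### The coefficient extraction for degree 6 forms -/

lemma coeff_formOf (α : Fin 7 → ℂ) (i : Fin 7) :
    coeff (Finsupp.single 0 (i:ℕ) + Finsupp.single 1 (6-(i:ℕ))) (formOf α) =
      (Nat.choose 6 (i:ℕ) : ℂ) * α i := by
  have : formOf α = ∑ i : Fin 7,
      monomial (Finsupp.single 0 (i:ℕ) + Finsupp.single 1 (6-(i:ℕ)))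
        ((Nat.choose 6 (i : ℕ) : ℂ) * α i) := by
    unfold formOf
    exact Finset.sum_congr rfl fun j _ => monrep _ _ _
  rw [this]
  fin_cases i <;>
  · simp only [Fin.sum_univ_seven, coeff_add, coeff_monomial, single_pair_eq,
      (show ((0:Fin 7):ℕ)=0 from rfl), (show ((1:Fin 7):ℕ)=1 from rfl),
      (show ((2:Fin 7):ℕ)=2 from rfl), (show ((3:Fin 7):ℕ)=3 from rfl),
      (show ((4:Fin 7):ℕ)=4 from rfl), (show ((5:Fin 7):ℕ)=5 from rfl),
      (show ((6:Fin 7):ℕ)=6 from rfl),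
      (show (⟨0, by omega⟩:Fin 7)=0 from rfl), (show (⟨1, by omega⟩:Fin 7)=1 from rfl),
      (show (⟨2, by omega⟩:Fin 7)=2 from rfl), (show (⟨3, by omega⟩:Fin 7)=3 from rfl),
      (show (⟨4, by omega⟩:Fin 7)=4 from rfl), (show (⟨5, by omega⟩:Fin 7)=5 from rfl),
      (show (⟨6, by omega⟩:Fin 7)=6 from rfl)]
    norm_num

lemma formOf_mem (α : Fin 7 → ℂ) : formOf α ∈ homogeneousSubmodule (Fin 2) ℂ 6 := by
  apply Submodule.sum_mem
  intro i _
  rw [monrep, mem_homogeneousSubmodule]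
  refine isHomogeneous_monomial _ ?_
  have h2 := i.2
  rw [degree_fin2]
  simp [Finsupp.single_apply]
  omega

def alphaOf (p : MvPolynomial (Fin 2) ℂ) : Fin 7 → ℂ := fun i =>
  coeff (Finsupp.single 0 (i:ℕ) + Finsupp.single 1 (6-(i:ℕ))) p / (Nat.choose 6 (i:ℕ) : ℂ)

lemma choose_ne (i : Fin 7) : (Nat.choose 6 (i:ℕ) : ℂ) ≠ 0 := by
  have h2 := i.2
  exact Nat.cast_ne_zero.mpr (Nat.choose_pos (by omega)).ne'

lemma eq_formOf {p : MvPolynomial (Fin 2) ℂ} (hp : p ∈ homogeneousSubmodule (Fin 2) ℂ 6) :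
    p = formOf (alphaOf p) := by
  ext m
  by_cases hm : m 0 + m 1 = 6
  · have ha : m 0 ≤ 6 := by omega
    have hmr : m = Finsupp.single 0 (m 0) + Finsupp.single 1 (6 - m 0) := by
      rw [show (6 - m 0) = m 1 by omega]
      exact fin2_decomp m
    have hc := coeff_formOf (alphaOf p) ⟨m 0, by omega⟩
    simp only [Fin.val_mk] at hc
    rw [hmr, hc]
    unfold alphaOf
    simp only [Fin.val_mk]
    rw [mul_div_cancel₀ _ (Nat.cast_ne_zero.mpr (Nat.choose_pos ha).ne')]
  · have h1 : coeff m p = 0 :=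
      ((mem_homogeneousSubmodule _ _).mp hp).coeff_eq_zero (by rw [degree_fin2]; omega)
    have h2 : coeff m (formOf (alphaOf p)) = 0 :=
      ((mem_homogeneousSubmodule _ _).mp (formOf_mem _)).coeff_eq_zero
        (by rw [degree_fin2]; omega)
    rw [h1, h2]

lemma formOf_inj : Function.Injective formOf := by
  intro a b h
  funext i
  have := congrArg (coeff (Finsupp.single 0 (i:ℕ) + Finsupp.single 1 (6-(i:ℕ)))) h
  rw [coeff_formOf, coeff_formOf] at this
  exact mul_left_cancel₀ (choose_ne i) this

/-! ### Linear maps -/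

def formOfL : (Fin 7 → ℂ) →ₗ[ℂ] MvPolynomial (Fin 2) ℂ where
  toFun := formOf
  map_add' a b := by
    unfold formOf
    rw [← Finset.sum_add_distrib]
    refine Finset.sum_congr rfl fun i _ => ?_
    rw [Pi.add_apply, mul_add, C_add]
    ring
  map_smul' c a := by
    simp only [formOf, RingHom.id_apply, Finset.smul_sum]
    refine Finset.sum_congr rfl fun i _ => ?_
    rw [smul_eq_C_mul, Pi.smul_apply, smul_eq_mul]
    simp only [C_mul]
    ring

def Phi : ((Fin 7 → ℂ) × (Fin 7 → ℂ)) →ₗ[ℂ]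
    (MvPolynomial (Fin 2) ℂ × MvPolynomial (Fin 2) ℂ) :=
  formOfL.prodMap formOfL

lemma Phi_inj : Function.Injective Phi := by
  intro a b h
  have h1 := congrArg Prod.fst h
  have h2 := congrArg Prod.snd h
  exact Prod.ext (formOf_inj h1) (formOf_inj h2)

def Lmap : ((Fin 7 → ℂ) × (Fin 7 → ℂ)) →ₗ[ℂ] (Fin 5 → ℂ) :=
  LinearMap.pi fun j : Fin 5 =>
    ((LinearMap.proj (R := ℂ) (φ := fun _ : Fin 7 => ℂ) ⟨(j:ℕ), by omega⟩).comp
      (LinearMap.fst ℂ (Fin 7 → ℂ) (Fin 7 → ℂ))) -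
    ((LinearMap.proj (R := ℂ) (φ := fun _ : Fin 7 => ℂ) ⟨(j:ℕ) + 2, by omega⟩).comp
      (LinearMap.snd ℂ (Fin 7 → ℂ) (Fin 7 → ℂ)))

lemma Lmap_apply (a b : Fin 7 → ℂ) (j : Fin 5) :
    Lmap (a, b) j = a ⟨(j:ℕ), by omega⟩ - b ⟨(j:ℕ) + 2, by omega⟩ := rfl

lemma Lmap_surj : Function.Surjective Lmap := by
  intro v
  refine ⟨((fun j => if h : (j:ℕ) ≤ 4 then v ⟨(j:ℕ), by omega⟩ else 0), 0), funext fun j => ?_⟩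
  rw [Lmap_apply]
  have hj := j.2
  rw [dif_pos (show ((⟨(j:ℕ), by omega⟩ : Fin 7):ℕ) ≤ 4 by simpa using by omega)]
  simp

lemma mem_ker_Lmap (a b : Fin 7 → ℂ) :
    (a, b) ∈ LinearMap.ker Lmap ↔ ∀ (i : ℕ) (h : i ≤ 4), a ⟨i, Nat.lt_of_le_of_lt h (by norm_num)⟩ = b ⟨i + 2, Nat.add_lt_add_right (Nat.lt_of_le_of_lt h (by norm_num : 4 < 5)) 2⟩ := by
  rw [LinearMap.mem_ker]
  constructor
  · intro h i hi
    have := congrFun h ⟨i, by omega⟩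
    rw [Lmap_apply] at this
    simpa [sub_eq_zero] using this
  · intro h
    funext j
    rw [Lmap_apply]
    have := h (j:ℕ) (by omega)
    simp [this]

lemma finrank_ker_Lmap : Module.finrank ℂ ↥(LinearMap.ker Lmap) = 9 := by
  have h := Lmap.finrank_range_add_finrank_ker
  rw [LinearMap.range_eq_top.mpr Lmap_surj, finrank_top] at h
  simp only [Module.finrank_prod, Module.finrank_pi, Module.finrank_self] at h
  simp only [Fintype.card_fin] at h
  omega

lemma S_eq :
    (homogeneousSubmodule (Fin 2) ℂ 6).prod (homogeneousSubmodule (Fin 2) ℂ 6) ⊓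
        LinearMap.ker ((transv1 2).flip (X 1 ^ 2, X 0 ^ 2)) =
      Submodule.map Phi (LinearMap.ker Lmap) := by
  apply le_antisymm
  · rintro ⟨p, q⟩ hx
    rw [Submodule.mem_inf] at hx
    obtain ⟨hprod, hker⟩ := hx
    obtain ⟨hp, hq⟩ := Submodule.mem_prod.mp hprod
    rw [LinearMap.mem_ker, LinearMap.flip_apply] at hker
    have hp' : p = formOf (alphaOf p) := eq_formOf hp
    have hq' : q = formOf (alphaOf q) := eq_formOf hq
    refine ⟨(alphaOf p, alphaOf q), ?_, ?_⟩
    · rw [SetLike.mem_coe, mem_ker_Lmap]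
      rw [hp', hq'] at hker
      exact (main_iff _ _).mp hker
    · simp only [Phi, LinearMap.prodMap_apply]
      exact Prod.ext hp'.symm hq'.symm
  · rintro x hx
    obtain ⟨⟨a, b⟩, hk, rfl⟩ := Submodule.mem_map.mp hx
    rw [Submodule.mem_inf]
    refine ⟨Submodule.mem_prod.mpr ⟨formOf_mem a, formOf_mem b⟩, ?_⟩
    rw [LinearMap.mem_ker, LinearMap.flip_apply]
    exact (main_iff a b).mpr ((mem_ker_Lmap a b).mp hk)

/-- **The kernel of `T^{(1,2)}(•, X₁Y₂² + Y₁X₂²) : V_{1,6} → V_{0,4}`.**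
Writing `H = X₁P + Y₁Q` with `P = ∑ C(6,i) α_i X₂^i Y₂^(6-i)`, `Q = ∑ C(6,i) β_i X₂^i Y₂^(6-i)`,
one has `T^{(1,2)}(H, X₁Y₂² + Y₁X₂²) = 0` iff `α_i = β_{i+2}` for `0 ≤ i ≤ 4`; in particular
the kernel has dimension 9. -/
theorem transvectant_16_kernel :
    (∀ α β : Fin 7 → ℂ,
      (transv1 2 (formOf α, formOf β) (X 1 ^ 2, X 0 ^ 2) = 0 ↔
        ∀ (i : ℕ) (h : i ≤ 4), α ⟨i, by omega⟩ = β ⟨i + 2, by omega⟩)) ∧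
    Module.finrank ℂ
      ↥((homogeneousSubmodule (Fin 2) ℂ 6).prod (homogeneousSubmodule (Fin 2) ℂ 6) ⊓
        LinearMap.ker ((transv1 2).flip (X 1 ^ 2, X 0 ^ 2))) = 9 := by
  constructor
  · exact main_iff
  · rw [S_eq, ← finrank_ker_Lmap]
    exact (Submodule.equivMapOfInjective Phi Phi_inj (LinearMap.ker Lmap)).finrank_eq.symm
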